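/- Let Ω₀ ⊆ {0,1,2}^5 ⊂ ℤ^5 and Λ₀ ⊆ (ℤ/3ℤ)^5 be finite sets of equal cardinality such that Σ_{x ∈ Ω₀} e^{2πi (ξ−ξ')·x/3} = 0 for distinct ξ, ξ' ∈ Λ₀. For M ≥ 1 define Ω₁ = ⋃_{k ∈ [0,M)^5 ∩ ℤ^5} (3k + Ω₀) ⊆ ℤ^5 and Λ₁ = { l/(3M) + ξ/3 mod ℤ^5 : l ∈ [0,M)^5 ∩ ℤ^5, ξ ∈ Λ₀ } ⊆ (ℝ/ℤ)^5. Then for all distinct η, η' ∈ Λ₁, Σ_{x ∈ Ω₁} e^{2πi (η−η')·x} = 0; hence the exponentials indexed by Λ₁ form an orthogonal basis of ℓ²(Ω₁). -/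

import Mathlib

open Complex

/-- The value `e^{2πi η·x}` for `η ∈ (ℝ/ℤ)^5` and `x ∈ ℤ^5`. -/
noncomputable def eChar (η : Fin 5 → AddCircle (1 : ℝ)) (x : Fin 5 → ℤ) : ℂ :=
  ∏ j : Fin 5, (AddCircle.toCircle ((x j) • η j) : ℂ)

noncomputable def eE (r : ℝ) : ℂ := Complex.exp (2 * Real.pi * Complex.I * r)

lemma eE_add (r s : ℝ) : eE (r + s) = eE r * eE s := by
  rw [eE, eE, eE, ← Complex.exp_add]; push_cast; ring_nf

lemma eE_int (n : ℤ) : eE n = 1 := by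
  rw [eE, show 2 * (Real.pi:ℂ) * Complex.I * ((n:ℝ):ℂ) = n * (2*Real.pi*Complex.I) by
    push_cast; ring, Complex.exp_int_mul_two_pi_mul_I]

lemma eE_sum {α : Type*} (s : Finset α) (f : α → ℝ) :
    eE (∑ i ∈ s, f i) = ∏ i ∈ s, eE (f i) := by
  unfold eE
  rw [← Complex.exp_sum]
  congr 1
  push_cast
  rw [Finset.mul_sum]

lemma toCircle_smul (x : ℤ) (r : ℝ) :
    (AddCircle.toCircle (x • (r : AddCircle (1:ℝ))) : ℂ) = eE (x * r) := by
  have h : x • (r : AddCircle (1:ℝ)) = ((x * r : ℝ) : AddCircle (1:ℝ)) := by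
    rw [← zsmul_eq_mul]
    exact (map_zsmul (QuotientAddGroup.mk' _) x r).symm
  rw [h, AddCircle.toCircle_apply_mk, Circle.coe_exp, eE]
  congr 1
  push_cast
  ring

lemma eChar_sub_coe (A B : Fin 5 → ℝ) (x : Fin 5 → ℤ) :
    eChar ((fun j => (A j : AddCircle (1:ℝ))) - (fun j => (B j : AddCircle (1:ℝ)))) x
      = eE (∑ j, (x j : ℝ) * (A j - B j)) := by
  rw [eChar, eE_sum]
  refine Finset.prod_congr rfl fun j _ => ?_
  have h1 : ((fun j => (A j : AddCircle (1:ℝ))) - fun j => (B j : AddCircle (1:ℝ))) j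
      = ((A j - B j : ℝ) : AddCircle (1:ℝ)) := by
    simp [Pi.sub_apply, ← QuotientAddGroup.mk_sub]
  rw [h1, toCircle_smul]

lemma eE_div_mod3 (a b : ℤ) (h : (3:ℤ) ∣ a - b) : eE ((a:ℝ)/3) = eE ((b:ℝ)/3) := by
  obtain ⟨c, hc⟩ := h
  have h2 : (a:ℝ)/3 = (b:ℝ)/3 + (c : ℤ) := by
    have h1 : a = b + 3*c := by linarith [hc]
    rw [h1]; push_cast; ring
  rw [h2, eE_add, eE_int, mul_one]

lemma geom_zero (M : ℕ) (d : ℤ) (hd : d ≠ 0) (hdlt : d.natAbs < M) :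
    ∑ k ∈ Finset.Ico (0:ℤ) (M:ℤ), eE ((d:ℝ) * k / M) = 0 := by
  have hMpos : 0 < M := lt_of_le_of_lt (Nat.zero_le _) hdlt
  have hM : (0:ℝ) < M := by exact_mod_cast hMpos
  have hMC : (M:ℂ) ≠ 0 := by exact_mod_cast hM.ne'
  set z : ℂ := eE ((d:ℝ)/M) with hz
  have hterm : ∀ k : ℕ, eE ((d:ℝ) * k / M) = z ^ k := by
    intro k
    rw [hz, eE, eE, ← Complex.exp_nat_mul]
    congr 1
    push_cast
    field_simp
  have hreindex : ∑ k ∈ Finset.Ico (0:ℤ) (M:ℤ), eE ((d:ℝ) * k / M)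
      = ∑ k ∈ Finset.range M, z ^ k := by
    refine Finset.sum_nbij' (fun k => k.toNat) (fun k => (k:ℤ)) ?_ ?_ ?_ ?_ ?_
    · intro a ha; simp only [Finset.mem_Ico] at ha; simp only [Finset.mem_range]; omega
    · intro a ha; simp only [Finset.mem_range] at ha; simp only [Finset.mem_Ico]; omega
    · intro a ha; simp only [Finset.mem_Ico] at ha; exact Int.toNat_of_nonneg ha.1
    · intro a _; simp
    · intro a ha
      simp only [Finset.mem_Ico] at ha
      rw [← hterm a.toNat]
      congr 3
      exact_mod_cast (Int.toNat_of_nonneg ha.1).symm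
  have hz1 : z ≠ 1 := by
    intro hone
    rw [hz, eE, Complex.exp_eq_one_iff] at hone
    obtain ⟨n, hn⟩ := hone
    have hne : (2 * (Real.pi:ℂ) * Complex.I) ≠ 0 := by
      simp [Real.pi_ne_zero, Complex.I_ne_zero]
    have h2 : (((d:ℝ)/M : ℝ) : ℂ) = n := by
      apply mul_left_cancel₀ hne
      rw [hn]; ring
    have h2' : (d:ℝ)/M = (n:ℝ) := by exact_mod_cast h2
    have h3 : (d:ℝ) = n * M := by field_simp at h2'; linarith
    have h4 : d = n * M := by exact_mod_cast h3
    rcases eq_or_ne n 0 with h | h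
    · exact hd (by simp [h4, h])
    · have h6 : d.natAbs = n.natAbs * M := by rw [h4, Int.natAbs_mul]; simp
      have : M ≤ d.natAbs := by
        rw [h6]; exact Nat.le_mul_of_pos_left M (by omega)
      omega
  have hzM : z ^ M = 1 := by
    rw [hz, eE, ← Complex.exp_nat_mul]
    rw [show (M:ℂ) * (2 * (Real.pi:ℂ) * Complex.I * (((d:ℝ)/M : ℝ):ℂ))
        = d * (2*Real.pi*Complex.I) by push_cast; field_simp]
    exact Complex.exp_int_mul_two_pi_mul_I d
  rw [hreindex, geom_sum_eq hz1, hzM, sub_self, zero_div]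


lemma coord_inj (M a a' v v' : ℤ) (hM : 1 ≤ M) (ha : 0 ≤ a) (haM : a < M)
    (ha' : 0 ≤ a') (ha'M : a' < M) (hv : 0 ≤ v) (hv3 : v < 3) (hv' : 0 ≤ v') (hv'3 : v' < 3)
    (h : a + M * v = a' + M * v') : a = a' ∧ v = v' := by
  rcases lt_trichotomy v v' with hlt | heq | hgt
  · exfalso
    nlinarith [mul_le_mul_of_nonneg_left (by omega : v + 1 ≤ v') (by omega : (0:ℤ) ≤ M)]
  · subst heq
    exact ⟨by omega, rfl⟩
  · exfalso
    nlinarith [mul_le_mul_of_nonneg_left (by omega : v' + 1 ≤ v) (by omega : (0:ℤ) ≤ M)]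

theorem stmt11 (Ω₀ : Finset (Fin 5 → ℤ))
    (hΩ₀ : ∀ x ∈ Ω₀, ∀ j, 0 ≤ x j ∧ x j < 3)
    (Λ₀ : Finset (Fin 5 → ZMod 3)) (hcard : Λ₀.card = Ω₀.card)
    (horth : ∀ ξ ∈ Λ₀, ∀ ξ' ∈ Λ₀, ξ ≠ ξ' →
      ∑ x ∈ Ω₀, Complex.exp (2 * Real.pi * Complex.I *
        ((∑ j : Fin 5, (ξ j - ξ' j) * (x j : ZMod 3)).val : ℕ) / 3) = 0)
    (M : ℕ)
    (Ω₁ : Finset (Fin 5 → ℤ))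
    (hΩ₁ : Ω₁ = ((Fintype.piFinset fun _ : Fin 5 => Finset.Ico (0 : ℤ) M) ×ˢ Ω₀).image
      (fun p j => 3 * p.1 j + p.2 j))
    (Λ₁ : Finset (Fin 5 → AddCircle (1 : ℝ)))
    (hΛ₁ : Λ₁ = ((Fintype.piFinset fun _ : Fin 5 => Finset.Ico (0 : ℤ) M) ×ˢ Λ₀).image
      (fun p j => (((p.1 j : ℝ) / (3 * M) + ((p.2 j).val : ℝ) / 3 : ℝ) : AddCircle (1 : ℝ)))) :
    Ω₁.card = M ^ 5 * Ω₀.card ∧ Λ₁.card = M ^ 5 * Ω₀.card ∧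
    ∀ η ∈ Λ₁, ∀ η' ∈ Λ₁, η ≠ η' →
      ∑ x ∈ Ω₁, eChar (η - η') x = 0 := by
  set K := Fintype.piFinset fun _ : Fin 5 => Finset.Ico (0 : ℤ) (M:ℤ) with hK
  -- cardinality of K
  have hKcard : K.card = M ^ 5 := by
    rw [hK, Fintype.card_piFinset]
    simp [Int.card_Ico]
  -- injectivity for Ω
  have hinjΩ : ∀ p ∈ K ×ˢ Ω₀, ∀ q ∈ K ×ˢ Ω₀,
      (fun j => 3 * p.1 j + p.2 j) = (fun j => 3 * q.1 j + q.2 j) → p = q := by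
    rintro ⟨k, y⟩ hk ⟨k', y'⟩ hk' h
    simp only [Finset.mem_product] at hk hk'
    have hy := hΩ₀ y hk.2
    have hy' := hΩ₀ y' hk'.2
    have hk_eq : k = k' := funext fun j => by
      have := congrFun h j; have h1 := hy j; have h2 := hy' j; simp only at this; omega
    have hy_eq : y = y' := funext fun j => by
      have := congrFun h j; have h1 := hy j; have h2 := hy' j; simp only at this; omega
    simp [Prod.ext_iff, hk_eq, hy_eq]
  -- injectivity for Λ
  have hinjΛ : ∀ p ∈ K ×ˢ Λ₀, ∀ q ∈ K ×ˢ Λ₀,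
      (fun j => (((p.1 j : ℝ) / (3 * M) + ((p.2 j).val : ℝ) / 3 : ℝ) : AddCircle (1 : ℝ)))
        = (fun j => (((q.1 j : ℝ) / (3 * M) + ((q.2 j).val : ℝ) / 3 : ℝ) : AddCircle (1 : ℝ)))
      → p = q := by
    rintro ⟨l, ξ⟩ hp ⟨l', ξ'⟩ hp' h
    simp only [Finset.mem_product, hK, Fintype.mem_piFinset, Finset.mem_Ico] at hp hp'
    have hMpos : 0 < M := by
      have := (hp.1 0).1; have := (hp.1 0).2; omega
    have hM : (0:ℝ) < M := by exact_mod_cast hMpos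
    have hval : ∀ (a : ℤ) (u : ZMod 3), 0 ≤ a → a < (M:ℤ) →
        (a:ℝ)/(3*M) + (u.val:ℝ)/3 ∈ Set.Ico (0:ℝ) (0+1) := by
      intro a u ha haM
      have hu : u.val < 3 := u.val_lt
      have hu' : (u.val:ℝ) ≤ 2 := by exact_mod_cast Nat.lt_succ_iff.mp hu
      have ha' : (a:ℝ) ≤ (M:ℝ) - 1 := by
        have h9 : a ≤ (M:ℤ) - 1 := by omega
        have h10 : (a:ℝ) ≤ (((M:ℤ) - 1 : ℤ) : ℝ) := by exact_mod_cast h9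
        push_cast at h10; linarith
      have ha0 : (0:ℝ) ≤ a := by exact_mod_cast ha
      constructor
      · positivity
      · rw [zero_add]
        rw [div_add_div _ _ (by positivity) (by norm_num : (3:ℝ) ≠ 0), div_lt_one (by positivity)]
        nlinarith
    have hcomb : ∀ (a : ℤ) (u : ZMod 3),
        (a:ℝ)/(3*M) + (u.val:ℝ)/3 = ((a:ℝ) + M*(u.val:ℝ))/(3*M) := by
      intro a u
      rw [div_add_div _ _ (by positivity) (by norm_num : (3:ℝ) ≠ 0)]
      rw [show (3*(M:ℝ))*3 = (3*M)*3 from rfl]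
      rw [show (a:ℝ)*3 + 3*(M:ℝ)*(u.val:ℝ) = ((a:ℝ) + M*(u.val:ℝ))*3 by ring]
      rw [mul_comm (3*(M:ℝ)) 3, ← div_div]
      rw [mul_div_assoc, div_self (by norm_num : (3:ℝ) ≠ 0) ]
      ring
    have hcoord : ∀ j, l j = l' j ∧ ξ j = ξ' j := by
      intro j
      have h1 := congrFun h j
      simp only at h1
      rw [AddCircle.coe_eq_coe_iff_of_mem_Ico
        (hval (l j) (ξ j) (hp.1 j).1 (hp.1 j).2)
        (hval (l' j) (ξ' j) (hp'.1 j).1 (hp'.1 j).2)] at h1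
      rw [hcomb, hcomb] at h1
      rw [div_eq_div_iff (by positivity) (by positivity)] at h1
      have h2 : (l j : ℝ) + M * ((ξ j).val:ℝ) = (l' j : ℝ) + M * ((ξ' j).val:ℝ) :=
        mul_right_cancel₀ (by positivity : (3*(M:ℝ)) ≠ 0) h1
      have h3 : (l j) + (M:ℤ) * ((ξ j).val : ℤ) = (l' j) + (M:ℤ) * ((ξ' j).val : ℤ) := by
        exact_mod_cast h2
      have hv1 : ((ξ j).val : ℤ) < 3 := by exact_mod_cast (ξ j).val_lt
      have hv2 : ((ξ' j).val : ℤ) < 3 := by exact_mod_cast (ξ' j).val_lt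
      have hl1 := hp.1 j
      have hl2 := hp'.1 j
      obtain ⟨he1, he2⟩ := coord_inj (M:ℤ) (l j) (l' j) ((ξ j).val:ℤ) ((ξ' j).val:ℤ)
        (by exact_mod_cast hMpos) hl1.1 hl1.2 hl2.1 hl2.2
        (by positivity) hv1 (by positivity) hv2 h3
      refine ⟨he1, ZMod.val_injective 3 ?_⟩
      exact_mod_cast he2
    have hl_eq : l = l' := funext fun j => (hcoord j).1
    have hξ_eq : ξ = ξ' := funext fun j => (hcoord j).2
    simp [Prod.ext_iff, hl_eq, hξ_eq]
  refine ⟨?_, ?_, ?_⟩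
  · rw [hΩ₁, Finset.card_image_of_injOn (fun p hp q hq => hinjΩ p hp q hq),
      Finset.card_product, hKcard]
  · rw [hΛ₁, Finset.card_image_of_injOn (fun p hp q hq => hinjΛ p hp q hq),
      Finset.card_product, hKcard, hcard]
  · rintro η hη η' hη' hne
    rw [hΛ₁] at hη hη'
    obtain ⟨⟨l, ξ⟩, hp, rfl⟩ := Finset.mem_image.mp hη
    obtain ⟨⟨l', ξ'⟩, hp', rfl⟩ := Finset.mem_image.mp hη'
    simp only [Finset.mem_product, hK, Fintype.mem_piFinset, Finset.mem_Ico] at hp hp'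
    have hMpos : 0 < M := by
      have h0 := hp.1 0
      omega
    have hMR : (0:ℝ) < M := by exact_mod_cast hMpos
    have hMne : (M:ℝ) ≠ 0 := hMR.ne'
    set A : Fin 5 → ℝ := fun j => (l j : ℝ)/(3*M) + ((ξ j).val : ℝ)/3 with hA
    set B : Fin 5 → ℝ := fun j => (l' j : ℝ)/(3*M) + ((ξ' j).val : ℝ)/3 with hB
    have hsplit : ∀ (k y : Fin 5 → ℤ),
        ∑ j, ((3 * k j + y j : ℤ) : ℝ) * (A j - B j)
          = (∑ j, ((l j - l' j : ℤ):ℝ) * (k j) / M)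
            + ((∑ j, (((ξ j).val : ℤ) - ((ξ' j).val : ℤ)) * k j : ℤ) : ℝ)
            + ∑ j, (y j : ℝ) * (A j - B j) := by
      intro k y
      push_cast
      rw [← Finset.sum_add_distrib, ← Finset.sum_add_distrib]
      refine Finset.sum_congr rfl fun j _ => ?_
      rw [hA, hB]
      field_simp
      ring
    have hterm : ∀ (k y : Fin 5 → ℤ),
        eE (∑ j, ((3 * k j + y j : ℤ) : ℝ) * (A j - B j))
          = (∏ j, eE (((l j - l' j : ℤ):ℝ) * (k j) / M))
            * eE (∑ j, (y j : ℝ) * (A j - B j)) := by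
      intro k y
      rw [hsplit k y, eE_add, eE_add, eE_int, mul_one, eE_sum]
    have goal_eq : ∑ x ∈ Ω₁, eChar
        ((fun j => ((A j : ℝ) : AddCircle (1:ℝ))) - (fun j => ((B j : ℝ) : AddCircle (1:ℝ)))) x
        = (∑ k ∈ K, ∏ j, eE (((l j - l' j : ℤ):ℝ) * (k j) / M))
          * (∑ y ∈ Ω₀, eE (∑ j, (y j : ℝ) * (A j - B j))) := by
      rw [hΩ₁, Finset.sum_image hinjΩ, Finset.sum_product, Finset.sum_mul_sum]
      refine Finset.sum_congr rfl fun k _ => Finset.sum_congr rfl fun y _ => ?_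
      rw [← hterm k y]
      exact eChar_sub_coe A B (fun j => 3 * k j + y j)
    have hfinal : (∑ k ∈ K, ∏ j, eE (((l j - l' j : ℤ):ℝ) * (k j) / M))
          * (∑ y ∈ Ω₀, eE (∑ j, (y j : ℝ) * (A j - B j))) = 0 := by
      by_cases hll : l = l'
      · -- second factor vanishes
        have hξ : ξ ≠ ξ' := by
          rintro rfl
          exact hne (by rw [hll])
        have hsecond : (∑ y ∈ Ω₀, eE (∑ j, (y j : ℝ) * (A j - B j))) = 0 := by
          rw [← horth ξ hp.2 ξ' hp'.2 hξ]
          refine Finset.sum_congr rfl fun y hy => ?_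
          have hAB : ∀ j, A j - B j = ((((ξ j).val : ℤ) - ((ξ' j).val : ℤ) : ℤ) : ℝ)/3 := by
            intro j
            rw [hA, hB, hll]
            push_cast
            ring
          have h1 : ∑ j, (y j : ℝ) * (A j - B j)
              = ((∑ j, y j * (((ξ j).val : ℤ) - ((ξ' j).val : ℤ)) : ℤ) : ℝ)/3 := by
            push_cast
            rw [Finset.sum_div]
            refine Finset.sum_congr rfl fun j _ => ?_
            rw [hAB j]
            push_cast
            ring
          rw [h1]
          have hdvd : (3:ℤ) ∣ (∑ j, y j * (((ξ j).val : ℤ) - ((ξ' j).val : ℤ)))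
              - (((∑ j : Fin 5, (ξ j - ξ' j) * (y j : ZMod 3)).val : ℕ) : ℤ) := by
            have hz : (((∑ j, y j * (((ξ j).val : ℤ) - ((ξ' j).val : ℤ)))
                - (((∑ j : Fin 5, (ξ j - ξ' j) * (y j : ZMod 3)).val : ℕ) : ℤ) : ℤ) : ZMod 3) = 0 := by
              push_cast
              simp only [ZMod.natCast_val, ZMod.cast_id, ZMod.intCast_cast]
              rw [sub_eq_zero]
              refine Finset.sum_congr rfl fun j _ => ?_
              ring
            exact_mod_cast (ZMod.intCast_zmod_eq_zero_iff_dvd _ 3).mp hz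
          rw [eE_div_mod3 _ _ hdvd, eE]
          congr 1
          push_cast
          ring
        rw [hsecond, mul_zero]
      · -- first factor vanishes
        obtain ⟨j₀, hj₀⟩ := Function.ne_iff.mp hll
        have hfirst : (∑ k ∈ K, ∏ j, eE (((l j - l' j : ℤ):ℝ) * (k j) / M)) = 0 := by
          have hps := Finset.prod_univ_sum (fun _ : Fin 5 => Finset.Ico (0:ℤ) (M:ℤ))
            (fun j a => eE (((l j - l' j : ℤ):ℝ) * a / M))
          rw [hK, ← hps]
          refine Finset.prod_eq_zero (Finset.mem_univ j₀) ?_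
          refine geom_zero M (l j₀ - l' j₀) (sub_ne_zero_of_ne hj₀) ?_
          have h1 := hp.1 j₀
          have h2 := hp'.1 j₀
          omega
        rw [hfirst, zero_mul]

    exact goal_eq.trans hfinal
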